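/- arXiv:1903.00795 — 5 statements merged into one kernel-verified Lean document; each statement's English description precedes it below -/
import Mathlib

section
/- Let ρ = ((w₁,w₂,w₃), e^{iq}) ∈ Iso₀(Nil₃) with q ∉ 2πℤ (equivalently cos q ≠ 1). Then there exist unique a₁, a₂, c ∈ ℝ such that ρ = ((0,0,c),1) · ((a₁,a₂,0),1) · ((0,0,0),e^{iq}) · ((a₁,a₂,0),1)⁻¹. Explicitly, (a₁,a₂,c) is the unique solution of w₁ = a₁(1 − cos q) + a₂ sin q, w₂ = a₂(1 − cos q) − a₁ sin q, w₃ = c − (1/2)(a₁² + a₂²) sin q; in particular the map (a₁,a₂,c) ↦ (w₁,w₂,w₃) defined by these formulas is a bijection of ℝ³. -/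
noncomputable section

/-- Multiplication of the Heisenberg group `Nil₃`, realized on `ℝ × ℝ × ℝ`. -/
def nilMul (a x : ℝ × ℝ × ℝ) : ℝ × ℝ × ℝ :=
  (a.1 + x.1, a.2.1 + x.2.1, a.2.2 + x.2.2 + (1/2) * (a.1 * x.2.1 - a.2.1 * x.1))

/-- Rotation of the first two coordinates by the unit complex number `u = e^{iθ}`. -/
def rot (u : ℂ) (x : ℝ × ℝ × ℝ) : ℝ × ℝ × ℝ :=
  (u.re * x.1 - u.im * x.2.1, u.im * x.1 + u.re * x.2.1, x.2.2)

/-- Multiplication of `Iso₀(Nil₃) = Nil₃ ⋊ U₁`, realized on `(ℝ × ℝ × ℝ) × ℂ`. -/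
def isoMul (ρ σ : (ℝ × ℝ × ℝ) × ℂ) : (ℝ × ℝ × ℝ) × ℂ :=
  (nilMul ρ.1 (rot ρ.2 σ.1), ρ.2 * σ.2)

/-- The conjugated element `𝔠 α e^{iq} α⁻¹` where `𝔠 = ((0,0,c),1)`, `α = ((a₁,a₂,0),1)`
(with `α⁻¹ = ((−a₁,−a₂,0),1)`), and `e^{iq} = ((0,0,0), e^{iq})`; `x = (a₁,a₂,c)`. -/
def conjExpr (q : ℝ) (x : ℝ × ℝ × ℝ) : (ℝ × ℝ × ℝ) × ℂ :=
  isoMul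
    (isoMul
      (isoMul (((0, 0, x.2.2) : ℝ × ℝ × ℝ), (1 : ℂ)) (((x.1, x.2.1, 0) : ℝ × ℝ × ℝ), (1 : ℂ)))
      (((0, 0, 0) : ℝ × ℝ × ℝ), Complex.exp ((q : ℂ) * Complex.I)))
    (((-x.1, -x.2.1, 0) : ℝ × ℝ × ℝ), (1 : ℂ))

lemma conjExpr_eq (q : ℝ) (x : ℝ × ℝ × ℝ) :
    conjExpr q x =
      ((x.1 * (1 - Real.cos q) + x.2.1 * Real.sin q,
        x.2.1 * (1 - Real.cos q) - x.1 * Real.sin q,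
        x.2.2 - (1/2) * (x.1 ^ 2 + x.2.1 ^ 2) * Real.sin q),
        Complex.exp ((q : ℂ) * Complex.I)) := by
  simp only [conjExpr, isoMul, nilMul, rot, Complex.one_re, Complex.one_im,
    Complex.exp_ofReal_mul_I_re, Complex.exp_ofReal_mul_I_im, one_mul, mul_one]
  refine Prod.ext (Prod.ext ?_ (Prod.ext ?_ ?_)) rfl <;> simp <;> ring

lemma solveSys (q : ℝ) (hq : Real.cos q ≠ 1) (w : ℝ × ℝ × ℝ) :
    ∃! x : ℝ × ℝ × ℝ,
      (w.1, w.2.1, w.2.2) =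
      ((x.1 * (1 - Real.cos q) + x.2.1 * Real.sin q,
        x.2.1 * (1 - Real.cos q) - x.1 * Real.sin q,
        x.2.2 - (1/2) * (x.1 ^ 2 + x.2.1 ^ 2) * Real.sin q) : ℝ × ℝ × ℝ) := by
  set c := Real.cos q
  set s := Real.sin q
  have hD : (1 - c) ^ 2 + s ^ 2 ≠ 0 := by
    intro h
    have h1 : (1 - c) ^ 2 = 0 ∧ s ^ 2 = 0 := by
      constructor <;> nlinarith [sq_nonneg (1 - c), sq_nonneg s]
    exact hq (by nlinarith [h1.1])
  set D := (1 - c) ^ 2 + s ^ 2 with hDdef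
  set a₁ := (w.1 * (1 - c) - w.2.1 * s) / D
  set a₂ := (w.2.1 * (1 - c) + w.1 * s) / D
  refine ⟨(a₁, a₂, w.2.2 + (1/2) * (a₁ ^ 2 + a₂ ^ 2) * s), ?_, ?_⟩
  · refine Prod.ext ?_ (Prod.ext ?_ ?_) <;> simp only [a₁, a₂] <;> field_simp <;> ring
  · rintro ⟨y₁, y₂, y₃⟩ h
    simp only [Prod.mk.injEq] at h
    obtain ⟨h1, h2, h3⟩ := h
    have e1 : y₁ = a₁ := by
      simp only [a₁]; rw [eq_div_iff hD, hDdef]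
      linear_combination s * h2 - (1 - c) * h1
    have e2 : y₂ = a₂ := by
      simp only [a₂]; rw [eq_div_iff hD, hDdef]
      linear_combination -(s * h1) - (1 - c) * h2
    refine Prod.ext e1 (Prod.ext e2 ?_)
    simp only
    rw [← e1, ← e2]; nlinarith [h3]

/-- if `cos q ≠ 1` then every `ρ = ((w₁,w₂,w₃), e^{iq})` has a unique
representation `ρ = 𝔠 α e^{iq} α⁻¹`; explicitly `(a₁,a₂,c)` is the unique solution of
`w₁ = a₁(1−cos q) + a₂ sin q`, `w₂ = a₂(1−cos q) − a₁ sin q`,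
`w₃ = c − (1/2)(a₁²+a₂²) sin q`, and this map `(a₁,a₂,c) ↦ (w₁,w₂,w₃)` is a bijection. -/
theorem stmt7 (w₁ w₂ w₃ q : ℝ) (hq : Real.cos q ≠ 1) :
    (∃! x : ℝ × ℝ × ℝ,
      (((w₁, w₂, w₃) : ℝ × ℝ × ℝ), Complex.exp ((q : ℂ) * Complex.I)) = conjExpr q x) ∧
    (∀ x : ℝ × ℝ × ℝ,
      (((w₁, w₂, w₃) : ℝ × ℝ × ℝ), Complex.exp ((q : ℂ) * Complex.I)) = conjExpr q x ↔
        (w₁ = x.1 * (1 - Real.cos q) + x.2.1 * Real.sin q ∧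
         w₂ = x.2.1 * (1 - Real.cos q) - x.1 * Real.sin q ∧
         w₃ = x.2.2 - (1/2) * (x.1 ^ 2 + x.2.1 ^ 2) * Real.sin q)) ∧
    Function.Bijective (fun x : ℝ × ℝ × ℝ =>
      ((x.1 * (1 - Real.cos q) + x.2.1 * Real.sin q,
        x.2.1 * (1 - Real.cos q) - x.1 * Real.sin q,
        x.2.2 - (1/2) * (x.1 ^ 2 + x.2.1 ^ 2) * Real.sin q) : ℝ × ℝ × ℝ)) := by
  have key : ∀ x : ℝ × ℝ × ℝ,
      (((w₁, w₂, w₃) : ℝ × ℝ × ℝ), Complex.exp ((q : ℂ) * Complex.I)) = conjExpr q x ↔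
        (w₁ = x.1 * (1 - Real.cos q) + x.2.1 * Real.sin q ∧
         w₂ = x.2.1 * (1 - Real.cos q) - x.1 * Real.sin q ∧
         w₃ = x.2.2 - (1/2) * (x.1 ^ 2 + x.2.1 ^ 2) * Real.sin q) := by
    intro x
    rw [conjExpr_eq]
    constructor
    · intro h
      have h1 := congrArg Prod.fst h
      simp only [Prod.mk.injEq] at h1
      exact ⟨h1.1, h1.2.1, h1.2.2⟩
    · rintro ⟨h1, h2, h3⟩
      refine Prod.ext ?_ rfl
      exact Prod.ext h1 (Prod.ext h2 h3)
  have hsolve := solveSys q hq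
  refine ⟨?_, key, ?_, ?_⟩
  · obtain ⟨x, hx, hux⟩ := hsolve (w₁, w₂, w₃)
    refine ⟨x, (key x).2 ?_, fun y hy => ?_⟩
    · have h := hx; simp only [Prod.mk.injEq] at h; exact h
    · have h := (key y).1 hy
      exact hux y (Prod.ext h.1 (Prod.ext h.2.1 h.2.2))
  · intro a b hab
    obtain ⟨x, hx, hux⟩ := hsolve
      (a.1 * (1 - Real.cos q) + a.2.1 * Real.sin q,
       a.2.1 * (1 - Real.cos q) - a.1 * Real.sin q,
       a.2.2 - (1/2) * (a.1 ^ 2 + a.2.1 ^ 2) * Real.sin q)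
    have ha := hux a rfl
    have hb := hux b hab
    rw [ha, hb]
  · intro w
    obtain ⟨x, hx, -⟩ := hsolve w
    exact ⟨x, hx.symm⟩
end
end

section
/- Let q be a nonzero real number and let a : ℝ → ℂ be a differentiable function satisfying the functional equation (1 − e^{iqs})·a(s) + e^{iqs}·(1 − e^{iqr})·a(r) = (1 − e^{iq(r+s)})·a(r+s) for all r, s ∈ ℝ. Then a is constant. -/
noncomputable section

/-- let `q ≠ 0` be real and `a : ℝ → ℂ` differentiable with
`(1 − e^{iqs})a(s) + e^{iqs}(1 − e^{iqr})a(r) = (1 − e^{iq(r+s)})a(r+s)` for all `r, s`.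
Then `a` is constant. -/
theorem stmt8 (q : ℝ) (hq : q ≠ 0) (a : ℝ → ℂ) (ha : Differentiable ℝ a)
    (heq : ∀ r s : ℝ,
      (1 - Complex.exp (Complex.I * q * s)) * a s
        + Complex.exp (Complex.I * q * s) * (1 - Complex.exp (Complex.I * q * r)) * a r
      = (1 - Complex.exp (Complex.I * q * (r + s))) * a (r + s)) :
    ∀ r s : ℝ, a r = a s := by
  have key : ∀ r s : ℝ, Complex.exp (Complex.I * q * r) ≠ 1 →
      Complex.exp (Complex.I * q * s) ≠ 1 → a r = a s := by
    intro r s hr hs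
    have h1 := heq r s
    have h2 := heq s r
    rw [add_comm (s:ℂ) (r:ℂ), add_comm s r] at h2
    have h3 : (1 - Complex.exp (Complex.I * q * r)) * (1 - Complex.exp (Complex.I * q * s))
        * (a s - a r) = 0 := by linear_combination h1 - h2
    rcases mul_eq_zero.mp h3 with h | h
    · rcases mul_eq_zero.mp h with h' | h'
      · exact absurd (by linear_combination -h') hr
      · exact absurd (by linear_combination -h') hs
    · exact (sub_eq_zero.mp h).symm
  have hqc : (q:ℂ) ≠ 0 := Complex.ofReal_ne_zero.mpr hq
  have hEp : Complex.exp (Complex.I * q * ((Real.pi / q : ℝ) : ℂ)) = -1 := by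
    have harg : Complex.I * (q:ℂ) * ((Real.pi / q : ℝ) : ℂ) = (Real.pi : ℂ) * Complex.I := by
      push_cast
      field_simp
    rw [harg, Complex.exp_pi_mul_I]
  have hEpne : Complex.exp (Complex.I * q * ((Real.pi / q : ℝ) : ℂ)) ≠ 1 := by
    rw [hEp]; norm_num
  suffices haux : ∀ s : ℝ, a s = a (Real.pi / q) by
    intro r s; rw [haux r, haux s]
  intro s
  by_cases hcase : Complex.exp (Complex.I * q * s) = 1
  · have hq' : 0 < |q| := abs_pos.mpr hq
    have h2pi : (0:ℝ) < 2 * Real.pi := by positivity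
    have hδ : 0 < 2 * Real.pi / |q| := by positivity
    have hev : ∀ᶠ t in nhdsWithin s {s}ᶜ, a t = a (Real.pi / q) := by
      have hball : {t : ℝ | dist t s < 2 * Real.pi / |q|} ∈ nhds s :=
        Metric.ball_mem_nhds s hδ
      filter_upwards [nhdsWithin_le_nhds hball, self_mem_nhdsWithin] with t ht hts
      refine key t _ ?_ hEpne
      intro hE
      have hsplit : Complex.exp (Complex.I * q * t)
          = Complex.exp (Complex.I * q * s) * Complex.exp (Complex.I * q * ((t:ℂ) - s)) := by
        rw [← Complex.exp_add]; congr 1; ring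
      rw [hsplit, hcase, one_mul] at hE
      obtain ⟨n, hn⟩ := Complex.exp_eq_one_iff.mp hE
      have hn' : Complex.I * ((q:ℂ) * ((t:ℂ) - s)) = Complex.I * ((n:ℂ) * (2 * Real.pi)) := by
        linear_combination hn
      have hn2 : (q:ℂ) * ((t:ℂ) - s) = (n:ℂ) * (2 * Real.pi) :=
        mul_left_cancel₀ Complex.I_ne_zero hn'
      have hn3 : q * (t - s) = (n:ℝ) * (2 * Real.pi) := by exact_mod_cast hn2
      have habs2 : |q * (t - s)| < 2 * Real.pi := by
        rw [abs_mul]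
        calc |q| * |t - s| < |q| * (2 * Real.pi / |q|) := by
              apply mul_lt_mul_of_pos_left _ hq'
              rwa [Real.dist_eq] at ht
          _ = 2 * Real.pi := by field_simp
      rw [hn3, abs_mul, abs_of_pos h2pi] at habs2
      have hn0 : n = 0 := by
        by_contra h
        have h1 : (1:ℝ) ≤ |(n:ℝ)| := by exact_mod_cast Int.one_le_abs h
        nlinarith
      rw [hn0] at hn3
      simp only [Int.cast_zero, zero_mul] at hn3
      rcases mul_eq_zero.mp hn3 with h | h
      · exact hq h
      · exact hts (by linarith [sub_eq_zero.mp h] : t = s)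
    have ht1 : Filter.Tendsto a (nhdsWithin s {s}ᶜ) (nhds (a s)) :=
      (ha.continuous.continuousAt).tendsto.mono_left nhdsWithin_le_nhds
    have ht2 : Filter.Tendsto a (nhdsWithin s {s}ᶜ) (nhds (a (Real.pi / q))) :=
      Filter.Tendsto.congr' (Filter.EventuallyEq.symm hev) tendsto_const_nhds
    exact tendsto_nhds_unique ht1 ht2
  · exact key s _ hcase hEpne
end
end

section
/- Let ρ : ℝ → Iso₀(Nil₃) be a continuously differentiable one-parameter group (group homomorphism), written ρ_t = ((p₁(t),p₂(t),p₃(t)), φ_t) with φ_t ∈ U₁, and assume ρ is not contained entirely in Nil₃, i.e. the angle component φ is not identically 1. Then there exist a nonzero real number q, a real number c, and a point α = (a₁,a₂) ∈ ℝ², all independent of t, such that for every t ∈ ℝ: ρ_t = ((0,0,tc),1) · ((a₁,a₂,0),1) · ((0,0,0),e^{itq}) · ((a₁,a₂,0),1)⁻¹. In particular, every one-parameter group of isometries of Nil₃ not consisting of translations is a group of helicoidal motions about a fixed vertical axis. -/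
noncomputable section

lemma exp_char (φ : ℝ → ℂ) (a : ℂ) (h0 : φ 0 = 1)
    (hd : ∀ t, HasDerivAt φ (a * φ t) t) : ∀ t, φ t = Complex.exp (a * t) := by
  have hexp : ∀ t : ℝ, HasDerivAt (fun t : ℝ => Complex.exp (-(a * t)))
      (Complex.exp (-(a * t)) * (-a)) t := by
    intro t
    have h1 : HasDerivAt (fun t : ℝ => -(a * (t : ℂ))) (-a) t := by
      have := (Complex.ofRealCLM.hasDerivAt (x := t)).const_mul a
      have h2 : HasDerivAt (-fun y : ℝ => a * (y : ℂ)) (-a) t := by simpa using this.neg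
      exact h2
    exact h1.cexp
  have hF : ∀ t, HasDerivAt (fun t => φ t * Complex.exp (-(a * t))) 0 t := by
    intro t
    have := (hd t).mul (hexp t)
    exact this.congr_deriv (by ring)
  have hconst : ∀ t, φ t * Complex.exp (-(a * t)) = 1 := by
    intro t
    have := is_const_of_deriv_eq_zero (f := fun t => φ t * Complex.exp (-(a * t)))
      (fun x => (hF x).differentiableAt) (fun x => (hF x).deriv) t 0
    simpa [h0] using this
  intro t
  have h := hconst t
  have : φ t * (Complex.exp (-(a * t)) * Complex.exp (a * t)) = Complex.exp (a * t) := by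
    rw [← mul_assoc, h, one_mul]
  rwa [← Complex.exp_add, neg_add_cancel, Complex.exp_zero, mul_one] at this

/-- a continuously differentiable one-parameter group `ρ_t` in `Iso₀(Nil₃)`
which is not contained entirely in `Nil₃` is a group of helicoidal motions: there are
`q ≠ 0`, `c ∈ ℝ` and `α = (a₁,a₂) ∈ ℝ²`, independent of `t`, with
`ρ_t = ((0,0,tc),1) · ((a₁,a₂,0),1) · ((0,0,0),e^{itq}) · ((a₁,a₂,0),1)⁻¹` for all `t`. -/
theorem stmt9 (ρ : ℝ → (ℝ × ℝ × ℝ) × ℂ)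
    (hC1 : ContDiff ℝ 1 ρ)
    (hunit : ∀ t, ‖(ρ t).2‖ = 1)
    (hid : ρ 0 = (((0, 0, 0) : ℝ × ℝ × ℝ), (1 : ℂ)))
    (hhom : ∀ s t : ℝ, ρ (s + t) = isoMul (ρ s) (ρ t))
    (hnot : ¬ ∀ t : ℝ, (ρ t).2 = 1) :
    ∃ q : ℝ, q ≠ 0 ∧ ∃ c : ℝ, ∃ α : ℝ × ℝ, ∀ t : ℝ,
      ρ t = isoMul
        (isoMul
          (isoMul (((0, 0, t * c) : ℝ × ℝ × ℝ), (1 : ℂ))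
            (((α.1, α.2, 0) : ℝ × ℝ × ℝ), (1 : ℂ)))
          (((0, 0, 0) : ℝ × ℝ × ℝ), Complex.exp (((t * q : ℝ) : ℂ) * Complex.I)))
        (((-α.1, -α.2, 0) : ℝ × ℝ × ℝ), (1 : ℂ)) := by
  classical
  set φ : ℝ → ℂ := fun t => (ρ t).2 with hφdef
  set x : ℝ → ℝ := fun t => (ρ t).1.1 with hxdef
  set y : ℝ → ℝ := fun t => (ρ t).1.2.1 with hydef
  set z : ℝ → ℝ := fun t => (ρ t).1.2.2 with hzdef
  have hφmul : ∀ s t, φ (s + t) = φ s * φ t := by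
    intro s t
    have := congrArg Prod.snd (hhom s t)
    simpa [isoMul] using this
  have hφ0 : φ 0 = 1 := by simp [φ, hid]
  have hρdiff : Differentiable ℝ ρ := hC1.differentiable one_ne_zero
  have hφdiff : Differentiable ℝ φ := fun t => (hρdiff t).snd
  set a := deriv φ 0 with hadef
  have hda : HasDerivAt φ a 0 := (hφdiff 0).hasDerivAt
  have hder : ∀ t, HasDerivAt φ (a * φ t) t := by
    intro t
    have h1 : HasDerivAt (fun s => φ (t + s)) (φ t * a) (-t + t) := by
      have he : (fun s => φ (t + s)) = fun s => φ t * φ s := by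
        funext s; rw [hφmul]
      rw [he, neg_add_cancel]
      simpa using hda.const_mul (φ t)
    have h2 := h1.comp_const_add (-t) t
    have he2 : (fun u => φ (t + (-t + u))) = φ := by
      funext u; congr 1; ring
    rw [he2] at h2
    exact h2.congr_deriv (by ring)
  have hφexp : ∀ t, φ t = Complex.exp (a * t) := exp_char φ a hφ0 hder
  have hre : a.re = 0 := by
    have h1 := hunit 1
    rw [show (ρ (1:ℝ)).2 = φ 1 from rfl, hφexp 1] at h1
    rw [Complex.norm_exp] at h1
    have h2 : Real.exp ((a * ((1:ℝ):ℂ)).re) = Real.exp 0 := by rw [h1, Real.exp_zero]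
    have := Real.exp_injective h2
    simpa using this
  set q := a.im with hqdef
  have haq : a = (q : ℂ) * Complex.I := by
    apply Complex.ext <;> simp [hre, hqdef]
  have hq0 : q ≠ 0 := by
    intro h
    apply hnot
    intro t
    have : (ρ t).2 = φ t := rfl
    rw [this, hφexp t, haq, h]
    simp
  have hφE : ∀ t, φ t = Complex.exp (((t * q : ℝ) : ℂ) * Complex.I) := by
    intro t
    rw [hφexp t, haq]
    push_cast
    ring_nf
  -- component cocycle equations
  have hx : ∀ s t, x (s + t) = x s + ((φ s).re * x t - (φ s).im * y t) := by
    intro s t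
    have := congrArg (fun p => p.1.1) (hhom s t)
    simpa [isoMul, nilMul, rot] using this
  have hy : ∀ s t, y (s + t) = y s + ((φ s).im * x t + (φ s).re * y t) := by
    intro s t
    have := congrArg (fun p => p.1.2.1) (hhom s t)
    simpa [isoMul, nilMul, rot] using this
  have hz : ∀ s t, z (s + t) = z s + z t + (1/2) *
      (x s * ((φ s).im * x t + (φ s).re * y t) - y s * ((φ s).re * x t - (φ s).im * y t)) := by
    intro s t
    have := congrArg (fun p => p.1.2.2) (hhom s t)
    simpa [isoMul, nilMul, rot] using this
  set w : ℝ → ℂ := fun t => (x t : ℂ) + (y t : ℂ) * Complex.I with hwdef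
  have hwre : ∀ t, (w t).re = x t := by intro t; simp [w]
  have hwim : ∀ t, (w t).im = y t := by intro t; simp [w]
  have hw : ∀ s t, w (s + t) = w s + φ s * w t := by
    intro s t
    apply Complex.ext
    · simp only [Complex.add_re, Complex.mul_re, hwre, hwim]
      rw [hx s t]
    · simp only [Complex.add_im, Complex.mul_im, hwre, hwim]
      rw [hy s t]; ring
  obtain ⟨t₀, ht₀⟩ : ∃ t, φ t ≠ 1 := by
    push_neg at hnot; exact hnot
  have hne : (1 : ℂ) - φ t₀ ≠ 0 := sub_ne_zero.mpr (Ne.symm ht₀)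
  set β : ℂ := w t₀ / (1 - φ t₀) with hβdef
  have hβ : ∀ s, w s = β * (1 - φ s) := by
    intro s
    have h1 := hw s t₀
    have h2 := hw t₀ s
    have h3 : w s + φ s * w t₀ = w t₀ + φ t₀ * w s := by
      rw [← h1, add_comm s t₀, h2]
    rw [hβdef]
    field_simp
    linear_combination h3
  have hxs : ∀ s, x s = β.re - β.re * (φ s).re + β.im * (φ s).im := by
    intro s
    have := congrArg Complex.re (hβ s)
    rw [hwre] at this
    rw [this]
    simp [Complex.mul_re]
    ring
  have hys : ∀ s, y s = β.im - β.im * (φ s).re - β.re * (φ s).im := by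
    intro s
    have := congrArg Complex.im (hβ s)
    rw [hwim] at this
    rw [this]
    simp [Complex.mul_im]
    ring
  have hN : ∀ s, (φ s).re ^ 2 + (φ s).im ^ 2 = 1 := by
    intro s
    have h := hunit s
    rw [show (ρ s).2 = φ s from rfl] at h
    have h2 : Complex.normSq (φ s) = 1 := by
      rw [Complex.normSq_eq_norm_sq, h, one_pow]
    simpa [Complex.normSq_apply, sq] using h2
  set m : ℝ := β.re ^ 2 + β.im ^ 2 with hmdef
  have hcross : ∀ s t, x s * ((φ s).im * x t + (φ s).re * y t)
      - y s * ((φ s).re * x t - (φ s).im * y t)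
      = m * ((φ s).im + (φ t).im - (φ (s + t)).im) := by
    intro s t
    rw [hφmul s t, Complex.mul_im, hxs s, hxs t, hys s, hys t, hmdef]
    linear_combination ((β.re ^ 2 + β.im ^ 2) * (φ t).im) * hN s
  set h : ℝ → ℝ := fun t => z t + (1/2) * m * (φ t).im with hhdef
  have hadd : ∀ s t, h (s + t) = h s + h t := by
    intro s t
    simp only [hhdef]
    linear_combination hz s t + (1/2) * hcross s t
  have hcont : Continuous h := by
    apply Continuous.add
    · exact hC1.continuous.fst.snd.snd
    · exact continuous_const.mul (Complex.continuous_im.comp hC1.continuous.snd)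
  set H : ℝ →+ ℝ := AddMonoidHom.mk' h hadd with hHdef
  have hlin : ∀ t, h t = t * h 1 := by
    intro t
    have hc : ⇑(H.toRealLinearMap hcont) = h := AddMonoidHom.coe_toRealLinearMap H hcont
    have := (H.toRealLinearMap hcont).map_smul t 1
    rw [smul_eq_mul, mul_one] at this
    rw [hc] at this
    simpa using this
  set c : ℝ := h 1 with hcdef
  have hzt : ∀ t, z t = t * c - (1/2) * m * (φ t).im := by
    intro t
    have := hlin t
    simp only [hhdef] at this
    linarith [this]
  refine ⟨q, hq0, c, (β.re, β.im), fun t => ?_⟩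
  have hρt : ρ t = ((x t, y t, z t), φ t) := rfl
  rw [hρt]
  simp only [isoMul, nilMul, rot, one_mul, mul_one, Complex.one_re, Complex.one_im]
  have hEt := hφE t
  refine Prod.ext (Prod.ext ?_ (Prod.ext ?_ ?_)) ?_
  · simp only
    rw [hxs t, hEt]
    ring
  · simp only
    rw [hys t, hEt]
    ring
  · simp only
    rw [hzt t, hEt, hmdef]
    ring
  · simpa using hEt
end
end

section
/- Fix p ∈ ℝ and define f : ℝ² → ℝ³ by f(x,y) = (4x cosh 2p + cosh 4y sinh 2p, sinh 4y, −2y sinh 2p + 2x cosh 2p sinh 4y) (a translation-invariant minimal surface in Nil₃). Then for all x, y, t ∈ ℝ: f(x+t, y) = (4t cosh 2p, 0, 0) · f(x,y), where · is the Nil₃ multiplication; i.e. f is equivariant with respect to the translation z ↦ z+t on the domain and the one-parameter group of left translations by (4t cosh 2p, 0, 0) in Nil₃. -/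
noncomputable section

/-- The translation-invariant minimal surface in `Nil₃` with parameter `p`. -/
def transSurf (p x y : ℝ) : ℝ × ℝ × ℝ :=
  (4 * x * Real.cosh (2 * p) + Real.cosh (4 * y) * Real.sinh (2 * p),
   Real.sinh (4 * y),
   -2 * y * Real.sinh (2 * p) + 2 * x * Real.cosh (2 * p) * Real.sinh (4 * y))

/-- the surface `f(x,y) = transSurf p x y` is equivariant with respect to
the translation `z ↦ z + t` on the domain and the one-parameter group of left
translations by `(4t cosh 2p, 0, 0)` in `Nil₃`. -/
theorem stmt12 (p x y t : ℝ) :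
    transSurf p (x + t) y
      = nilMul ((4 * t * Real.cosh (2 * p), 0, 0) : ℝ × ℝ × ℝ) (transSurf p x y) := by
  simp only [transSurf, nilMul]; refine Prod.ext ?_ (Prod.ext ?_ ?_) <;> ring
end
end

section
/- Let p, q, s ∈ ℝ and set ψ₁ = cosh s cosh p − i e^{iq} sinh s sinh p and ψ₂ = i sinh s cosh p + e^{iq} cosh s sinh p (complex numbers). Set m := √(cosh²(2p) − sin²(q) sinh²(2p)). Then m ≥ 1 (in particular m > 0), and |ψ₁|² + |ψ₂|² = cosh(2s) cosh(2p) + sin(q) sinh(2s) sinh(2p) = m · cosh(2s + arsinh(sin(q) sinh(2p)/m)), where arsinh denotes the inverse hyperbolic sine. -/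
noncomputable section

/-- for `ψ₁ = cosh s cosh p − i e^{iq} sinh s sinh p` and
`ψ₂ = i sinh s cosh p + e^{iq} cosh s sinh p`, with
`m = √(cosh²(2p) − sin²(q) sinh²(2p))`, one has `m ≥ 1` and
`|ψ₁|² + |ψ₂|² = cosh(2s)cosh(2p) + sin(q)sinh(2s)sinh(2p)
              = m cosh(2s + arsinh(sin(q)sinh(2p)/m))`. -/
theorem stmt16 (p q s : ℝ) :
    1 ≤ Real.sqrt (Real.cosh (2 * p) ^ 2 - Real.sin q ^ 2 * Real.sinh (2 * p) ^ 2) ∧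
    Norm.norm ((Real.cosh s * Real.cosh p : ℝ)
        - Complex.I * Complex.exp ((q : ℂ) * Complex.I) * ((Real.sinh s * Real.sinh p : ℝ) : ℂ)) ^ 2
      + Norm.norm (Complex.I * ((Real.sinh s * Real.cosh p : ℝ) : ℂ)
        + Complex.exp ((q : ℂ) * Complex.I) * ((Real.cosh s * Real.sinh p : ℝ) : ℂ)) ^ 2
      = Real.cosh (2 * s) * Real.cosh (2 * p)
        + Real.sin q * Real.sinh (2 * s) * Real.sinh (2 * p) ∧
    Norm.norm ((Real.cosh s * Real.cosh p : ℝ)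
        - Complex.I * Complex.exp ((q : ℂ) * Complex.I) * ((Real.sinh s * Real.sinh p : ℝ) : ℂ)) ^ 2
      + Norm.norm (Complex.I * ((Real.sinh s * Real.cosh p : ℝ) : ℂ)
        + Complex.exp ((q : ℂ) * Complex.I) * ((Real.cosh s * Real.sinh p : ℝ) : ℂ)) ^ 2
      = Real.sqrt (Real.cosh (2 * p) ^ 2 - Real.sin q ^ 2 * Real.sinh (2 * p) ^ 2)
        * Real.cosh (2 * s + Real.arsinh (Real.sin q * Real.sinh (2 * p)
            / Real.sqrt (Real.cosh (2 * p) ^ 2 - Real.sin q ^ 2 * Real.sinh (2 * p) ^ 2))) := by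
  have hs2 : Real.sin q ^ 2 ≤ 1 := Real.sin_sq_le_one q
  have hsq : (0:ℝ) ≤ Real.sinh (2*p) ^ 2 := sq_nonneg _
  have hM : Real.sin q ^ 2 * Real.sinh (2*p) ^ 2 ≤ Real.sinh (2*p) ^ 2 := by nlinarith
  have hcsq : Real.cosh (2*p) ^ 2 = Real.sinh (2*p) ^ 2 + 1 := Real.cosh_sq (2*p)
  have h1 : (1:ℝ) ≤ Real.cosh (2*p) ^ 2 - Real.sin q ^ 2 * Real.sinh (2*p) ^ 2 := by
    nlinarith
  have hm1 : 1 ≤ Real.sqrt (Real.cosh (2 * p) ^ 2 - Real.sin q ^ 2 * Real.sinh (2 * p) ^ 2) := by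
    rw [show (1:ℝ) = Real.sqrt 1 by simp]
    exact Real.sqrt_le_sqrt h1
  set m := Real.sqrt (Real.cosh (2 * p) ^ 2 - Real.sin q ^ 2 * Real.sinh (2 * p) ^ 2) with hmdef
  have hmpos : 0 < m := lt_of_lt_of_le one_pos hm1
  have hm2 : m ^ 2 = Real.cosh (2*p) ^ 2 - Real.sin q ^ 2 * Real.sinh (2*p) ^ 2 :=
    Real.sq_sqrt (by linarith)
  have habs : Norm.norm ((Real.cosh s * Real.cosh p : ℝ)
        - Complex.I * Complex.exp ((q : ℂ) * Complex.I) * ((Real.sinh s * Real.sinh p : ℝ) : ℂ)) ^ 2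
      + Norm.norm (Complex.I * ((Real.sinh s * Real.cosh p : ℝ) : ℂ)
        + Complex.exp ((q : ℂ) * Complex.I) * ((Real.cosh s * Real.sinh p : ℝ) : ℂ)) ^ 2
      = Real.cosh (2 * s) * Real.cosh (2 * p)
        + Real.sin q * Real.sinh (2 * s) * Real.sinh (2 * p) := by
    rw [Complex.sq_norm, Complex.sq_norm, Complex.exp_mul_I,
        ← Complex.ofReal_cos, ← Complex.ofReal_sin]
    simp [Complex.normSq_apply, Complex.sinh_ofReal_re, Complex.sin_ofReal_re,
      Complex.cos_ofReal_re]
    rw [Real.cosh_two_mul, Real.cosh_two_mul, Real.sinh_two_mul, Real.sinh_two_mul]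
    linear_combination ((Real.sinh s * Real.sinh p) ^ 2 + (Real.cosh s * Real.sinh p) ^ 2) *
      Real.sin_sq_add_cos_sq q
  refine ⟨hm1, habs, ?_⟩
  rw [habs]
  set x := Real.sin q * Real.sinh (2 * p) / m with hxdef
  have hmne : m ≠ 0 := ne_of_gt hmpos
  have h1x : (1:ℝ) + x ^ 2 = (Real.cosh (2 * p) / m) ^ 2 := by
    rw [hxdef, div_pow, div_pow]
    field_simp
    linear_combination hm2
  rw [Real.cosh_add, Real.cosh_arsinh, Real.sinh_arsinh, h1x,
    Real.sqrt_sq (by positivity : (0:ℝ) ≤ Real.cosh (2 * p) / m), hxdef]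
  field_simp
end
end
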